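/- Let X be a compact Hausdorff space and 𝒜 a function algebra on X. Every maximal set of antisymmetry A of 𝒜 is an intersection of peak sets of 𝒜, i.e. there is a family (E_i) of peak sets of 𝒜 with A = ⋂_i E_i. -/

import Mathlib

variable {X : Type*} [TopologicalSpace X] [CompactSpace X] [T2Space X]

/-- A function algebra on a compact Hausdorff space `X`: a closed subalgebra of `C(X, ℂ)`
(it contains the constants, being a subalgebra) which separates the points of `X`. -/
def IsFunctionAlgebra (𝒜 : Subalgebra ℂ C(X, ℂ)) : Prop :=
  IsClosed (𝒜 : Set C(X, ℂ)) ∧ ∀ x y : X, x ≠ y → ∃ u ∈ 𝒜, u x ≠ u y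

/-- `S` is a set of antisymmetry of `𝒜` if every `u ∈ 𝒜` which is real valued on `S`
is constant on `S`. -/
def IsAntisymmetrySet (𝒜 : Subalgebra ℂ C(X, ℂ)) (S : Set X) : Prop :=
  ∀ u ∈ 𝒜, (∀ x ∈ S, (u x).im = 0) → ∀ x ∈ S, ∀ y ∈ S, u x = u y

/-- A maximal set of antisymmetry: a set of antisymmetry not properly contained in any
other set of antisymmetry. -/
def IsMaximalAntisymmetrySet (𝒜 : Subalgebra ℂ C(X, ℂ)) (S : Set X) : Prop :=
  IsAntisymmetrySet 𝒜 S ∧ ∀ S', IsAntisymmetrySet 𝒜 S' → S ⊆ S' → S' = S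

/-- A peak set of `𝒜`: a closed set `E` for which there is `u ∈ 𝒜` with `u = 1` on `E` and
`|u| < 1` off `E`. -/
def IsPeakSet (𝒜 : Subalgebra ℂ C(X, ℂ)) (E : Set X) : Prop :=
  IsClosed E ∧ ∃ u ∈ 𝒜, (∀ x ∈ E, u x = 1) ∧ ∀ x ∉ E, ‖u x‖ < 1

set_option linter.unusedSectionVars false
set_option linter.unusedVariables false

namespace BishopAux


lemma abs_one_add_lt {z : ℂ} (hz : ‖z‖ ≤ 1) (hz1 : z ≠ 1) :
    ‖1 + z‖ < 2 := by
  have hre : z.re ≤ 1 := (Complex.re_le_norm z).trans hz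
  have hns : Complex.normSq z ≤ 1 := by
    have h := Complex.sq_norm z
    nlinarith [norm_nonneg z]
  have hre' : z.re < 1 := by
    rcases lt_or_eq_of_le hre with h | h
    · exact h
    · exfalso
      apply hz1
      have h1 : Complex.normSq z = z.re * z.re + z.im * z.im := Complex.normSq_apply z
      have him : z.im = 0 := by nlinarith
      apply Complex.ext <;> simp [h, him]
  have h2 : ‖1 + z‖ ^ 2 = Complex.normSq (1 + z) := Complex.sq_norm _
  have h3 : Complex.normSq (1 + z) = 1 + 2 * z.re + Complex.normSq z := by
    simp [Complex.normSq_apply]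
    ring
  nlinarith [norm_nonneg (1 + z), Complex.normSq_nonneg z]

lemma one_add_pow_le {ε : ℝ} (hε : 0 ≤ ε) :
    ∀ N : ℕ, 2 * N * ε ≤ 1 → (1 + ε) ^ N ≤ 1 + 2 * N * ε := by
  intro N
  induction N with
  | zero => simp
  | succ n ih =>
    intro h
    have hcast : ((n + 1 : ℕ) : ℝ) = (n : ℝ) + 1 := by push_cast; ring
    rw [hcast] at h ⊢
    have hn : 2 * (n : ℝ) * ε ≤ 1 := by nlinarith
    have hih := ih hn
    have hp : (0:ℝ) ≤ (1 + ε) ^ n := by positivity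
    rw [pow_succ]
    nlinarith

lemma geom_half_real : ∑' n : ℕ, ((2:ℝ))⁻¹ ^ (n + 1) = 1 := by
  have h : |(2:ℝ)⁻¹| < 1 := by rw [abs_of_nonneg] <;> norm_num
  calc ∑' n : ℕ, (2:ℝ)⁻¹ ^ (n+1) = ∑' n : ℕ, (2:ℝ)⁻¹ ^ n * (2:ℝ)⁻¹ := by
        refine tsum_congr fun n => ?_
        rw [pow_succ]
    _ = (∑' n : ℕ, (2:ℝ)⁻¹ ^ n) * (2:ℝ)⁻¹ := tsum_mul_right
    _ = (1 - (2:ℝ)⁻¹)⁻¹ * 2⁻¹ := by rw [tsum_geometric_of_abs_lt_one h]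
    _ = 1 := by norm_num

lemma geom_half_complex : ∑' n : ℕ, ((2:ℂ))⁻¹ ^ (n + 1) = 1 := by
  have h : ‖(2:ℂ)⁻¹‖ < 1 := by
    rw [norm_inv]
    simp
    norm_num
  calc ∑' n : ℕ, (2:ℂ)⁻¹ ^ (n+1) = ∑' n : ℕ, (2:ℂ)⁻¹ ^ n * (2:ℂ)⁻¹ := by
        refine tsum_congr fun n => ?_
        rw [pow_succ]
    _ = (∑' n : ℕ, (2:ℂ)⁻¹ ^ n) * (2:ℂ)⁻¹ := tsum_mul_right
    _ = (1 - (2:ℂ)⁻¹)⁻¹ * 2⁻¹ := by rw [tsum_geometric_of_norm_lt_one h]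
    _ = 1 := by norm_num

lemma summable_half : Summable (fun n : ℕ => ((2:ℝ))⁻¹ ^ (n + 1)) := by
  apply Summable.comp_injective (summable_geometric_of_lt_one (by norm_num) (by norm_num : (2:ℝ)⁻¹ < 1))
  exact fun a b => by omega

lemma sum_range_half (N : ℕ) : ∑ n ∈ Finset.range N, ((2:ℝ))⁻¹ ^ (n + 1) = 1 - (2⁻¹) ^ N := by
  induction N with
  | zero => simp
  | succ n ih =>
    rw [Finset.sum_range_succ, ih, pow_succ]
    ring



def PSet (𝒜 : Subalgebra ℂ C(X, ℂ)) (E : Set X) : Prop :=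
  ∃ 𝒮 : Set (Set X), (∀ S ∈ 𝒮, IsPeakSet 𝒜 S) ∧ E = ⋂₀ 𝒮

lemma isPeakSet_univ (𝒜 : Subalgebra ℂ C(X, ℂ)) : IsPeakSet 𝒜 Set.univ :=
  ⟨isClosed_univ, 1, one_mem _, fun _ _ => rfl, fun x hx => absurd (Set.mem_univ x) hx⟩

lemma pSet_sInter {𝒜 : Subalgebra ℂ C(X, ℂ)} {C : Set (Set X)} (h : ∀ E ∈ C, PSet 𝒜 E) :
    PSet 𝒜 (⋂₀ C) := by
  choose fam hfam hfameq using h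
  refine ⟨⋃ (E : Set X) (hE : E ∈ C), fam E hE, ?_, ?_⟩
  · intro S hS
    simp only [Set.mem_iUnion] at hS
    obtain ⟨E, hE, hS⟩ := hS
    exact hfam E hE S hS
  · ext x
    simp only [Set.mem_sInter]
    constructor
    · intro hx S hS
      simp only [Set.mem_iUnion] at hS
      obtain ⟨E, hE, hSE⟩ := hS
      have hxE : x ∈ E := hx E hE
      rw [hfameq E hE] at hxE
      exact hxE S hSE
    · intro hx E hE
      rw [hfameq E hE]
      intro S hS
      exact hx S (Set.mem_iUnion.2 ⟨E, Set.mem_iUnion.2 ⟨hE, hS⟩⟩)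

lemma isPeakSet_biInter {𝒜 : Subalgebra ℂ C(X, ℂ)} {ι : Type*} (t : Finset ι)
    (ht : t.Nonempty) {P : ι → Set X} (hP : ∀ i, IsPeakSet 𝒜 (P i)) :
    IsPeakSet 𝒜 (⋂ i ∈ t, P i) := by
  classical
  have hPc : ∀ i, IsClosed (P i) := fun i => (hP i).1
  choose u hu h1 h2 using fun i => (hP i).2
  have hle : ∀ i x, ‖u i x‖ ≤ 1 := by
    intro i x
    by_cases hx : x ∈ P i
    · rw [h1 i x hx]; simp
    · exact (h2 i x hx).le
  have hcard : (0:ℝ) < (t.card : ℝ) := by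
    have := Finset.card_pos.2 ht
    exact_mod_cast this
  refine ⟨isClosed_biInter fun i _ => hPc i, (t.card : ℂ)⁻¹ • ∑ i ∈ t, u i,
    Subalgebra.smul_mem _ (sum_mem fun i _ => hu i) _, ?_, ?_⟩
  · intro x hx
    simp only [Set.mem_iInter] at hx
    have : ∀ i ∈ t, u i x = 1 := fun i hi => h1 i x (hx i hi)
    simp only [ContinuousMap.smul_apply, ContinuousMap.sum_apply]
    rw [Finset.sum_congr rfl this]
    simp
    rw [mul_comm]
    rw [mul_inv_cancel₀]
    exact_mod_cast hcard.ne'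
  · intro x hx
    simp only [Set.mem_iInter, not_forall] at hx
    obtain ⟨i₀, hi₀, hxi₀⟩ := hx
    simp only [ContinuousMap.smul_apply, ContinuousMap.sum_apply, smul_eq_mul, norm_mul]
    have habs : ‖((t.card : ℂ))⁻¹‖ = (t.card : ℝ)⁻¹ := by
      rw [norm_inv, Complex.norm_natCast]
    rw [habs]
    have hlt : ‖∑ i ∈ t, u i x‖ < t.card := by
      calc ‖∑ i ∈ t, u i x‖ ≤ ∑ i ∈ t, ‖u i x‖ :=
            norm_sum_le _ _
        _ < ∑ i ∈ t, 1 := by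
            refine Finset.sum_lt_sum (fun i hi => hle i x) ⟨i₀, hi₀, h2 i₀ x hxi₀⟩
        _ = t.card := by simp
    calc (t.card : ℝ)⁻¹ * ‖∑ i ∈ t, u i x‖ < (t.card : ℝ)⁻¹ * t.card := by
          exact mul_lt_mul_of_pos_left hlt (by positivity)
      _ = 1 := by
          rw [inv_mul_cancel₀ hcard.ne']

lemma pSet_subset_open {𝒜 : Subalgebra ℂ C(X, ℂ)} {E U : Set X} (hE : PSet 𝒜 E)
    (hU : IsOpen U) (hEU : E ⊆ U) : ∃ P : Set X, IsPeakSet 𝒜 P ∧ E ⊆ P ∧ P ⊆ U := by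
  obtain ⟨𝒮, h𝒮, rfl⟩ := hE
  have hcomp : IsCompact Uᶜ := hU.isClosed_compl.isCompact
  have hcover : Uᶜ ⊆ ⋃ S : 𝒮, ((S : Set X))ᶜ := by
    intro x hx
    by_contra hxx
    simp only [Set.mem_iUnion, Set.mem_compl_iff, not_exists, not_not] at hxx
    exact hx (hEU fun S hS => hxx ⟨S, hS⟩)
  obtain ⟨t, ht⟩ := hcomp.elim_finite_subcover (fun S : 𝒮 => ((S : Set X))ᶜ)
    (fun S => ((h𝒮 S S.2).1).isOpen_compl) hcover
  rcases t.eq_empty_or_nonempty with h | h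
  · subst h
    refine ⟨Set.univ, isPeakSet_univ 𝒜, Set.subset_univ _, ?_⟩
    intro x _
    by_contra hx
    simpa using ht hx
  · refine ⟨⋂ S ∈ t, (S : Set X), isPeakSet_biInter t h (fun S => h𝒮 S S.2), ?_, ?_⟩
    · intro x hx
      simp only [Set.mem_iInter]
      exact fun S _ => hx S S.2
    · intro x hx
      by_contra hxU
      have := ht hxU
      simp only [Set.mem_iUnion] at this
      obtain ⟨S, hSt, hxS⟩ := this
      simp only [Set.mem_iInter] at hx
      exact hxS (hx S hSt)

/-- Evaluation as a continuous linear map. -/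
noncomputable def evalCLM' (x : X) : C(X, ℂ) →L[ℂ] ℂ :=
  LinearMap.mkContinuous
    { toFun := fun f => f x
      map_add' := fun f g => rfl
      map_smul' := fun c f => rfl } 1
    (fun f => by simpa using f.norm_coe_le_norm x)

lemma tsum_mem {𝒜 : Subalgebra ℂ C(X, ℂ)} (hcl : IsClosed (𝒜 : Set C(X, ℂ)))
    {f : ℕ → C(X, ℂ)} (hf : ∀ n, f n ∈ 𝒜) (hs : Summable f) : ∑' n, f n ∈ 𝒜 :=
  hcl.mem_of_tendsto hs.hasSum.tendsto_sum_nat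
    (Filter.Eventually.of_forall fun n => sum_mem fun i _ => hf i)

lemma tsum_apply'' {f : ℕ → C(X, ℂ)} (hs : Summable f) (x : X) :
    (∑' n, f n) x = ∑' n, f n x :=
  ((hs.hasSum.mapL (evalCLM' x)).tsum_eq).symm

lemma exp_mem {𝒜 : Subalgebra ℂ C(X, ℂ)} (hcl : IsClosed (𝒜 : Set C(X, ℂ)))
    {f : C(X, ℂ)} (hf : f ∈ 𝒜) : ∃ p ∈ 𝒜, ∀ x, p x = Complex.exp (f x) := by
  have hb : ∀ n : ℕ, ‖(n.factorial : ℂ)⁻¹ • f ^ n‖ ≤ (‖f‖ + 1) ^ n / n.factorial := by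
    intro n
    rw [norm_smul]
    have h1 : ‖((n.factorial : ℂ))⁻¹‖ = ((n.factorial : ℝ))⁻¹ := by
      rw [norm_inv, Complex.norm_natCast]
    rw [h1]
    have h2 : ‖f ^ n‖ ≤ (‖f‖ + 1) ^ n := by
      rw [ContinuousMap.norm_le _ (by positivity)]
      intro x
      have hfx : ‖(f ^ n) x‖ = ‖f x‖ ^ n := by
        simp [norm_pow]
      rw [hfx]
      exact pow_le_pow_left₀ (norm_nonneg _) (by linarith [f.norm_coe_le_norm x]) n
    have h3 : (0:ℝ) ≤ ((n.factorial : ℝ))⁻¹ := by positivity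
    calc ((n.factorial:ℝ))⁻¹ * ‖f ^ n‖ ≤ ((n.factorial:ℝ))⁻¹ * (‖f‖+1)^n :=
          mul_le_mul_of_nonneg_left h2 h3
      _ = (‖f‖+1)^n / n.factorial := by ring
  have hs : Summable fun n : ℕ => (n.factorial : ℂ)⁻¹ • f ^ n :=
    Summable.of_norm_bounded (Real.summable_pow_div_factorial (‖f‖ + 1)) hb
  have hmem : ∀ n : ℕ, (n.factorial : ℂ)⁻¹ • f ^ n ∈ 𝒜 :=
    fun n => Subalgebra.smul_mem _ (pow_mem hf n) _
  have hmem2 : (∑' n : ℕ, (n.factorial : ℂ)⁻¹ • f ^ n) ∈ 𝒜 := tsum_mem hcl hmem hs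
  refine ⟨_, hmem2, fun x => ?_⟩
  rw [tsum_apply'' hs x]
  have heq : ∀ n : ℕ, ((n.factorial : ℂ)⁻¹ • f ^ n) x = (n.factorial : ℂ)⁻¹ • (f x) ^ n := by
    intro n
    simp
  rw [tsum_congr heq, Complex.exp_eq_exp_ℂ, NormedSpace.exp_eq_tsum ℂ]


set_option maxHeartbeats 2000000 in
lemma key {𝒜 : Subalgebra ℂ C(X, ℂ)} (hcl : IsClosed (𝒜 : Set C(X, ℂ)))
    {E : Set X} (hE : PSet 𝒜 E) {g : C(X, ℂ)} (hg : g ∈ 𝒜)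
    (hg1 : ∀ x ∈ E, ‖g x‖ ≤ 1) :
    PSet 𝒜 (E ∩ {x | g x = 1}) := by
  classical
  set F := E ∩ {x | g x = 1} with hFdef
  have key' : ∀ x₀, x₀ ∉ F → ∃ Q, IsPeakSet 𝒜 Q ∧ F ⊆ Q ∧ x₀ ∉ Q := by
    intro x₀ hx₀F
    by_cases hx₀E : x₀ ∈ E
    case neg =>
      obtain ⟨𝒮₀, h𝒮₀, hE₀⟩ := hE
      have hex : ∃ S ∈ 𝒮₀, x₀ ∉ S := by
        by_contra hc
        push_neg at hc
        exact hx₀E (hE₀ ▸ Set.mem_sInter.2 hc)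
      obtain ⟨S, hS, hxS⟩ := hex
      refine ⟨S, h𝒮₀ S hS, fun y hy => ?_, hxS⟩
      have hyE : y ∈ E := hy.1
      rw [hE₀] at hyE
      exact Set.mem_sInter.1 hyE S hS
    case pos =>
      -- Step 0 : the function g' = (1+g)/2
      set g' : C(X, ℂ) := (2⁻¹ : ℂ) • (1 + g) with hg'def
      have hg'mem : g' ∈ 𝒜 := Subalgebra.smul_mem _ (add_mem (one_mem _) hg) _
      have hg'apply : ∀ x, g' x = (2⁻¹ : ℂ) * (1 + g x) := by
        intro x
        simp [hg'def]
        ring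
      have habs2inv : ‖(2⁻¹ : ℂ)‖ = 2⁻¹ := by
        rw [norm_inv]
        simp
      have habs_g' : ∀ x, ‖g' x‖ = 2⁻¹ * ‖1 + g x‖ := by
        intro x
        rw [hg'apply, norm_mul, habs2inv]
      have hg'E : ∀ x ∈ E, ‖g' x‖ ≤ 1 := by
        intro x hx
        rw [habs_g' x]
        have h1 : ‖1 + g x‖ ≤ ‖(1:ℂ)‖ + ‖g x‖ :=
          norm_add_le _ _
        have h2 := hg1 x hx
        simp only [norm_one] at h1
        linarith
      have hg'F : ∀ x ∈ F, g' x = 1 := by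
        intro x hx
        have hgx : g x = 1 := hx.2
        rw [hg'apply, hgx]
        norm_num
      have ht₀ : ‖g' x₀‖ < 1 := by
        have hgx₀ : g x₀ ≠ 1 := fun h => hx₀F ⟨hx₀E, h⟩
        have h1 := abs_one_add_lt (hg1 x₀ hx₀E) hgx₀
        rw [habs_g' x₀]
        linarith
      set M : ℝ := ‖g'‖ + 1 with hM
      have hM1 : 1 ≤ M := by
        rw [hM]
        linarith [norm_nonneg g']
      have hM0 : 0 < M := by linarith
      have hgM : ∀ x, ‖g' x‖ ≤ M := by
        intro x
        have h1 := g'.norm_coe_le_norm x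
        rw [hM]
        linarith
      -- Step 1 : the epsilons
      set ε : ℕ → ℝ := fun n => (2⁻¹ : ℝ) ^ (n + 3) / (n + 1) with hε
      have hεpos : ∀ n, 0 < ε n := by
        intro n
        have h1 : (0:ℝ) < (2⁻¹ : ℝ) ^ (n+3) := by positivity
        have h2 : (0:ℝ) < (n:ℝ) + 1 := by positivity
        exact div_pos h1 h2
      have hεmono : ∀ m n, m ≤ n → ε n ≤ ε m := by
        intro m n hmn
        have h1 : (2⁻¹:ℝ) ^ (n+3) ≤ (2⁻¹:ℝ) ^ (m+3) :=
          pow_le_pow_of_le_one (by norm_num) (by norm_num) (by omega)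
        have h2 : (0:ℝ) < (m:ℝ) + 1 := by positivity
        have h3 : (m:ℝ) + 1 ≤ (n:ℝ) + 1 := by
          have : (m:ℝ) ≤ n := by exact_mod_cast hmn
          linarith
        exact div_le_div₀ (by positivity) h1 h2 h3
      have hεkey : ∀ n, (1 + ε n) ^ (n + 1) ≤ 1 + (2⁻¹:ℝ) ^ (n + 2) := by
        intro n
        have hcalc : 2 * ((n:ℝ) + 1) * ε n = (2⁻¹:ℝ) ^ (n + 2) := by
          have hne : ((n:ℝ) + 1) ≠ 0 := by positivity
          rw [hε]
          field_simp
          rw [pow_succ]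
          ring
        have hle1 : 2 * ((n + 1 : ℕ):ℝ) * ε n ≤ 1 := by
          push_cast
          rw [hcalc]
          apply pow_le_one₀ <;> norm_num
        have := one_add_pow_le (hεpos n).le (n+1) hle1
        push_cast at this
        rw [hcalc] at this
        exact this
      have hεkey2 : ∀ n, (1 + ε n) ^ (n + 1) ≤ 2 := by
        intro n
        refine (hεkey n).trans ?_
        have : (2⁻¹:ℝ) ^ (n+2) ≤ 1 := by
          apply pow_le_one₀ <;> norm_num
        linarith
      -- Step 2 : the open sets and peak sets
      set U : ℕ → Set X := fun n => {x | ‖g' x‖ < 1 + ε n} with hU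
      have hUopen : ∀ n, IsOpen (U n) := by
        intro n
        have hc : Continuous fun x => ‖g' x‖ :=
          continuous_norm.comp g'.continuous
        exact isOpen_lt hc continuous_const
      have hEU : ∀ n, E ⊆ U n := by
        intro n x hx
        have := hg'E x hx
        have := hεpos n
        simp only [hU, Set.mem_setOf_eq]
        linarith
      have hUmono : ∀ m n, m ≤ n → U n ⊆ U m := by
        intro m n hmn x hx
        simp only [hU, Set.mem_setOf_eq] at hx ⊢
        have := hεmono m n hmn
        linarith
      have hPex : ∀ n, ∃ P : Set X, IsPeakSet 𝒜 P ∧ E ⊆ P ∧ P ⊆ U n :=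
        fun n => pSet_subset_open hE (hUopen n) (hEU n)
      choose P hPpeak hEP hPU using hPex
      have hPh : ∀ n, ∃ h ∈ 𝒜, (∀ x ∈ P n, h x = 1) ∧ ∀ x ∉ P n, ‖h x‖ < 1 :=
        fun n => (hPpeak n).2
      choose h hhmem hh1 hh2 using hPh
      have hhle : ∀ n x, ‖h n x‖ ≤ 1 := by
        intro n x
        by_cases hx : x ∈ P n
        · rw [hh1 n x hx]; simp
        · exact (hh2 n x hx).le
      -- Step 3 : the exponents k n
      have hkex : ∀ n, ∃ k : ℕ, ∀ x ∉ U n, ‖h n x‖ ^ k * M ^ (n+1) ≤ 2⁻¹ := by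
        intro n
        rcases Set.eq_empty_or_nonempty ((U n)ᶜ) with hc | hc
        · refine ⟨0, fun x hx => absurd ?_ (Set.notMem_empty x)⟩
          rw [← hc]
          exact hx
        · have hcomp : IsCompact ((U n)ᶜ) := ((hUopen n).isClosed_compl).isCompact
          obtain ⟨z, hz, hzmax⟩ := hcomp.exists_isMaxOn hc
            ((continuous_norm.comp (h n).continuous).continuousOn)
          set r := ‖h n z‖ with hr
          have hr1 : r < 1 := hh2 n z (fun hzP => hz (hPU n hzP))
          have hr0 : 0 ≤ r := norm_nonneg _
          have hMp : (0:ℝ) < M ^ (n+1) := by positivity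
          obtain ⟨k, hk⟩ := exists_pow_lt_of_lt_one (show (0:ℝ) < 2⁻¹ / M ^ (n+1) by positivity) hr1
          refine ⟨k, fun x hx => ?_⟩
          have hxr : ‖h n x‖ ≤ r := hzmax hx
          have h1 : ‖h n x‖ ^ k ≤ r ^ k :=
            pow_le_pow_left₀ (norm_nonneg _) hxr k
          have h2 : r ^ k * M ^ (n+1) < 2⁻¹ := (lt_div_iff₀ hMp).1 hk
          nlinarith [pow_nonneg (norm_nonneg (h n x)) k]
      choose k hk using hkex
      -- Step 4 : the functions φ n
      set φ : ℕ → C(X, ℂ) := fun n => (h n) ^ (k n) * g' ^ (n+1) with hφ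
      have hφmem : ∀ n, φ n ∈ 𝒜 := fun n => mul_mem (pow_mem (hhmem n) _) (pow_mem hg'mem _)
      have hφabs : ∀ n x, ‖φ n x‖ =
          ‖h n x‖ ^ (k n) * ‖g' x‖ ^ (n+1) := by
        intro n x
        simp only [hφ, ContinuousMap.mul_apply, ContinuousMap.pow_apply, norm_mul, norm_pow]
      have hφle : ∀ n x, ‖φ n x‖ ≤ ‖g' x‖ ^ (n+1) := by
        intro n x
        rw [hφabs]
        have h1 : ‖h n x‖ ^ (k n) ≤ 1 :=
          pow_le_one₀ (norm_nonneg _) (hhle n x)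
        nlinarith [pow_nonneg (norm_nonneg (g' x)) (n+1),
          pow_nonneg (norm_nonneg (h n x)) (k n)]
      have hφout : ∀ n x, x ∉ U n → ‖φ n x‖ ≤ 2⁻¹ := by
        intro n x hx
        rw [hφabs]
        have h1 : ‖g' x‖ ^ (n+1) ≤ M ^ (n+1) :=
          pow_le_pow_left₀ (norm_nonneg _) (hgM x) _
        have h2 := hk n x hx
        nlinarith [pow_nonneg (norm_nonneg (h n x)) (k n),
          pow_nonneg (norm_nonneg (g' x)) (n+1)]
      have hφglob : ∀ n x, ‖φ n x‖ ≤ 2 := by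
        intro n x
        by_cases hx : x ∈ U n
        · refine (hφle n x).trans ?_
          have hxU : ‖g' x‖ < 1 + ε n := hx
          have h1 : ‖g' x‖ ^ (n+1) ≤ (1 + ε n) ^ (n+1) :=
            pow_le_pow_left₀ (norm_nonneg _) hxU.le _
          linarith [hεkey2 n]
        · linarith [hφout n x hx]
      have hφF : ∀ n, ∀ x ∈ F, φ n x = 1 := by
        intro n x hx
        have hhx : h n x = 1 := hh1 n x (hEP n hx.1)
        have hgx : g' x = 1 := hg'F x hx
        simp only [hφ, ContinuousMap.mul_apply, ContinuousMap.pow_apply, hhx, hgx, one_pow, mul_one]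
      -- Step 5 : the series w
      set T : ℕ → C(X, ℂ) := fun n => ((2:ℂ))⁻¹ ^ (n+1) • φ n with hT
      have hTmem : ∀ n, T n ∈ 𝒜 := fun n => Subalgebra.smul_mem _ (hφmem n) _
      have hTapply : ∀ n x, T n x = (2:ℂ)⁻¹ ^ (n+1) * φ n x := by
        intro n x
        simp [hT]
      have hTnorm : ∀ n x, ‖T n x‖ = (2⁻¹:ℝ) ^ (n+1) * ‖φ n x‖ := by
        intro n x
        rw [hTapply, norm_mul, norm_pow, habs2inv]
      have hTb : ∀ n x, ‖T n x‖ ≤ (2⁻¹:ℝ) ^ n := by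
        intro n x
        rw [hTnorm]
        have h1 := hφglob n x
        have h2 : (2⁻¹:ℝ) ^ (n+1) * 2 = (2⁻¹:ℝ) ^ n := by
          rw [pow_succ]
          ring
        nlinarith [pow_nonneg (show (0:ℝ) ≤ 2⁻¹ by norm_num) (n+1)]
      have hTle : ∀ n, ‖T n‖ ≤ (2⁻¹:ℝ) ^ n := by
        intro n
        rw [ContinuousMap.norm_le _ (by positivity)]
        intro x
        exact hTb n x
      have hTsum : Summable T :=
        Summable.of_norm_bounded (summable_geometric_of_lt_one (by norm_num) (by norm_num)) hTle
      obtain ⟨w, hw⟩ : ∃ w : C(X, ℂ), w = ∑' n, T n := ⟨_, rfl⟩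
      have hwmem : w ∈ 𝒜 := by
        rw [hw]
        exact tsum_mem hcl hTmem hTsum
      have hwapply : ∀ x, w x = ∑' n, T n x := by
        intro x
        rw [hw]
        exact tsum_apply'' hTsum x
      have habsx : ∀ x, Summable fun n => ‖T n x‖ :=
        fun x => Summable.of_nonneg_of_le (fun n => norm_nonneg _) (fun n => hTb n x)
          (summable_geometric_of_lt_one (by norm_num) (by norm_num))
      have hwabs_le : ∀ x, ‖w x‖ ≤ ∑' n, ‖T n x‖ := by
        intro x
        rw [hwapply x]
        have h1 : Summable fun n => ‖T n x‖ := by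
          have := habsx x
          simpa using this
        have := norm_tsum_le_tsum_norm h1
        simpa using this
      -- Step 6 : |w| ≤ 1 everywhere
      have hwabs : ∀ x, ‖w x‖ ≤ 1 := by
        intro x
        refine (hwabs_le x).trans ?_
        by_cases hxall : ∀ n, x ∈ U n
        · have hgx1 : ‖g' x‖ ≤ 1 := by
            by_contra hgt
            push_neg at hgt
            obtain ⟨n, hn⟩ := exists_nat_gt (‖g' x‖ - 1)⁻¹
            have hδ : 0 < ‖g' x‖ - 1 := by linarith
            have h0 : (0:ℝ) < (n:ℝ) + 1 := by positivity
            have hn' : (‖g' x‖ - 1)⁻¹ < (n:ℝ) + 1 := by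
              have : (n:ℝ) ≤ (n:ℝ) + 1 := by linarith
              linarith
            have h2 : 1 / ((n:ℝ) + 1) < ‖g' x‖ - 1 := by
              rw [div_lt_iff₀ h0]
              rw [inv_lt_iff_one_lt_mul₀ hδ] at hn'
              linarith [mul_comm (‖g' x‖ - 1) ((n:ℝ) + 1)]
            have h1 : ε n ≤ 1 / ((n:ℝ)+1) := by
              rw [hε]
              exact div_le_div₀ (by norm_num) (pow_le_one₀ (by norm_num) (by norm_num)) h0 le_rfl
            have h3 := hxall n
            simp only [hU, Set.mem_setOf_eq] at h3
            linarith
          calc ∑' n, ‖T n x‖ ≤ ∑' n : ℕ, (2⁻¹:ℝ) ^ (n+1) := by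
                apply Summable.tsum_le_tsum ?_ (habsx x) summable_half
                intro n
                rw [hTnorm]
                have h1 : ‖φ n x‖ ≤ 1 :=
                  (hφle n x).trans (pow_le_one₀ (norm_nonneg _) hgx1)
                nlinarith [pow_nonneg (show (0:ℝ) ≤ 2⁻¹ by norm_num) (n+1)]
            _ = 1 := geom_half_real
        · push_neg at hxall
          set N := Nat.find hxall with hN
          have hNspec : x ∉ U N := Nat.find_spec hxall
          have hNmin : ∀ m, m < N → x ∈ U m := by
            intro m hm
            have := Nat.find_min hxall hm
            exact of_not_not this
          have hout : ∀ n, N ≤ n → x ∉ U n := fun n hn hxU => hNspec (hUmono N n hn hxU)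
          have hsplit : ∑' n, ‖T n x‖ =
              (∑ n ∈ Finset.range N, ‖T n x‖) + ∑' n, ‖T (n + N) x‖ :=
            (Summable.sum_add_tsum_nat_add N (habsx x)).symm
          rw [hsplit]
          have hsumshift : Summable fun n => ‖T (n + N) x‖ :=
            (habsx x).comp_injective (add_left_injective N)
          have htail : ∑' n, ‖T (n + N) x‖ ≤ (2⁻¹:ℝ) ^ (N+1) := by
            have hle : ∀ n : ℕ, ‖T (n+N) x‖ ≤ (2⁻¹:ℝ) ^ (N+1) * (2⁻¹:ℝ) ^ (n+1) := by
              intro n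
              rw [hTnorm]
              have h1 : ‖φ (n+N) x‖ ≤ 2⁻¹ := hφout _ x (hout _ (by omega))
              have h2 : (2⁻¹:ℝ) ^ (n+N+1) * 2⁻¹ = (2⁻¹:ℝ) ^ (N+1) * (2⁻¹:ℝ) ^ (n+1) := by
                rw [← pow_succ, ← pow_add]
                congr 1
                omega
              calc (2⁻¹:ℝ) ^ (n+N+1) * ‖φ (n+N) x‖
                  ≤ (2⁻¹:ℝ) ^ (n+N+1) * 2⁻¹ :=
                    mul_le_mul_of_nonneg_left h1 (by positivity)
                _ = _ := h2
            calc ∑' n, ‖T (n+N) x‖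
                ≤ ∑' n : ℕ, (2⁻¹:ℝ) ^ (N+1) * (2⁻¹:ℝ) ^ (n+1) :=
                  Summable.tsum_le_tsum hle hsumshift (summable_half.mul_left _)
              _ = (2⁻¹:ℝ) ^ (N+1) * ∑' n : ℕ, (2⁻¹:ℝ) ^ (n+1) := tsum_mul_left
              _ = (2⁻¹:ℝ) ^ (N+1) := by rw [geom_half_real, mul_one]
          rcases Nat.eq_zero_or_pos N with hN0 | hNpos
          · rw [hN0] at htail ⊢
            simp only [Finset.range_zero, Finset.sum_empty, zero_add]
            refine htail.trans ?_
            norm_num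
          · set β : ℝ := 1 + ε (N-1) with hβ
            have hβ1 : 1 ≤ β := by
              have := hεpos (N-1)
              simp [hβ]
              linarith
            have hgβ : ‖g' x‖ < β := hNmin (N-1) (by omega)
            have hβN : β ^ N ≤ 1 + (2⁻¹:ℝ) ^ (N+1) := by
              have hthis := hεkey (N-1)
              have hNN : N - 1 + 1 = N := by omega
              have hNN2 : N - 1 + 2 = N + 1 := by omega
              rw [hNN, hNN2] at hthis
              exact hthis
            have hhead : ∑ n ∈ Finset.range N, ‖T n x‖ ≤ (1 - (2⁻¹:ℝ)^N) * β^N := by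
              have hle : ∀ n ∈ Finset.range N, ‖T n x‖ ≤ (2⁻¹:ℝ)^(n+1) * β^N := by
                intro n hn
                rw [Finset.mem_range] at hn
                rw [hTnorm]
                have h1 : ‖φ n x‖ ≤ β ^ N := by
                  refine (hφle n x).trans ?_
                  calc ‖g' x‖ ^ (n+1) ≤ β ^ (n+1) :=
                        pow_le_pow_left₀ (norm_nonneg _) hgβ.le _
                    _ ≤ β ^ N := pow_le_pow_right₀ hβ1 (by omega)
                exact mul_le_mul_of_nonneg_left h1 (by positivity)
              calc ∑ n ∈ Finset.range N, ‖T n x‖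
                  ≤ ∑ n ∈ Finset.range N, (2⁻¹:ℝ)^(n+1) * β^N := Finset.sum_le_sum hle
                _ = (∑ n ∈ Finset.range N, (2⁻¹:ℝ)^(n+1)) * β^N := by rw [← Finset.sum_mul]
                _ = (1 - (2⁻¹:ℝ)^N) * β^N := by rw [sum_range_half]
            have h1 : (0:ℝ) < (2⁻¹:ℝ)^N := by positivity
            have h2 : (2⁻¹:ℝ)^N ≤ 1 := by
              apply pow_le_one₀ <;> norm_num
            have h3 : (2⁻¹:ℝ)^(N+1) = (2⁻¹:ℝ)^N * 2⁻¹ := pow_succ _ _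
            nlinarith [pow_nonneg (show (0:ℝ) ≤ β by linarith) N]
      -- Step 7 : value on F and at x₀
      have hwF : ∀ x ∈ F, w x = 1 := by
        intro x hx
        rw [hwapply x]
        have hc : ∀ n, T n x = (2:ℂ)⁻¹ ^ (n+1) := by
          intro n
          rw [hTapply, hφF n x hx, mul_one]
        rw [tsum_congr hc, geom_half_complex]
      have hwx₀ : ‖w x₀‖ < 1 := by
        have hb : ∀ n, ‖T n x₀‖ ≤ (2⁻¹:ℝ)^(n+1) * ‖g' x₀‖ := by
          intro n
          rw [hTnorm]
          have h1 : ‖φ n x₀‖ ≤ ‖g' x₀‖ := by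
            refine (hφle n x₀).trans ?_
            exact pow_le_of_le_one (norm_nonneg _) ht₀.le (by omega)
          exact mul_le_mul_of_nonneg_left h1 (by positivity)
        calc ‖w x₀‖ ≤ ∑' n, ‖T n x₀‖ := hwabs_le x₀
          _ ≤ ∑' n : ℕ, (2⁻¹:ℝ)^(n+1) * ‖g' x₀‖ :=
              Summable.tsum_le_tsum hb (habsx x₀) (summable_half.mul_right _)
          _ = (∑' n : ℕ, (2⁻¹:ℝ)^(n+1)) * ‖g' x₀‖ := tsum_mul_right
          _ = ‖g' x₀‖ := by rw [geom_half_real, one_mul]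
          _ < 1 := ht₀
      -- Step 8 : the peak set Q
      obtain ⟨v, hv⟩ : ∃ v : C(X, ℂ), v = (2⁻¹:ℂ) • (1 + w) := ⟨_, rfl⟩
      have hvmem : v ∈ 𝒜 := by
        rw [hv]
        exact Subalgebra.smul_mem _ (add_mem (one_mem _) hwmem) _
      have hvapply : ∀ x, v x = (2⁻¹:ℂ) * (1 + w x) := by
        intro x
        rw [hv, ContinuousMap.smul_apply, ContinuousMap.add_apply, ContinuousMap.one_apply,
          smul_eq_mul]
      refine ⟨{x | w x = 1}, ⟨?_, v, hvmem, ?_, ?_⟩, ?_, ?_⟩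
      · exact isClosed_eq w.continuous continuous_const
      · intro x hx
        have hx1 : w x = 1 := hx
        rw [hvapply, hx1]
        norm_num
      · intro x hx
        have hx1 : w x ≠ 1 := hx
        have h1 : ‖1 + w x‖ < 2 := abs_one_add_lt (hwabs x) hx1
        have h2 : ‖v x‖ = 2⁻¹ * ‖1 + w x‖ := by
          rw [hvapply, norm_mul, habs2inv]
        rw [h2]
        linarith
      · intro y hy
        exact hwF y hy
      · intro hx
        have hx1 : w x₀ = 1 := hx
        rw [hx1] at hwx₀
        simp at hwx₀

  refine ⟨{Q | IsPeakSet 𝒜 Q ∧ F ⊆ Q}, fun Q hQ => hQ.1, ?_⟩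
  apply Set.Subset.antisymm
  · intro x hx Q hQ
    exact hQ.2 hx
  · intro x hx
    by_contra hxF
    obtain ⟨Q, h1, h2, h3⟩ := key' x hxF
    exact h3 (Set.mem_sInter.1 hx Q ⟨h1, h2⟩)

end BishopAux

/-- Every maximal set of antisymmetry of a function algebra is an intersection of peak sets. -/
theorem maximal_antisymmetrySet_eq_iInter_peakSets
    (𝒜 : Subalgebra ℂ C(X, ℂ)) (h𝒜 : IsFunctionAlgebra 𝒜)
    (A : Set X) (hA : IsMaximalAntisymmetrySet 𝒜 A) :
    ∃ 𝒮 : Set (Set X), (∀ E ∈ 𝒮, IsPeakSet 𝒜 E) ∧ A = ⋂₀ 𝒮 := by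
  classical
  rcases Set.eq_empty_or_nonempty A with hAe | hAne
  · have hX : IsEmpty X := by
      by_contra hne
      rw [not_isEmpty_iff] at hne
      obtain ⟨x⟩ := hne
      have hsing : IsAntisymmetrySet 𝒜 {x} := by
        intro u hu hreal y hy z hz
        rw [Set.mem_singleton_iff] at hy hz
        rw [hy, hz]
      have h1 := hA.2 {x} hsing (hAe ▸ Set.empty_subset _)
      rw [hAe] at h1
      exact (Set.singleton_ne_empty x) h1
    refine ⟨∅, by simp, ?_⟩
    rw [Set.sInter_empty, hAe]
    exact (Set.univ_eq_empty_iff.2 hX).symm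
  · obtain ⟨a₀, ha₀⟩ := hAne
    have hzorn : ∃ m, Minimal (· ∈ {E : Set X | BishopAux.PSet 𝒜 E ∧ A ⊆ E}) m := by
      apply zorn_superset
      intro c hcT hchain
      exact ⟨⋂₀ c, ⟨BishopAux.pSet_sInter (fun E hE => (hcT hE).1),
        Set.subset_sInter fun E hE => (hcT hE).2⟩,
        fun s hs => Set.sInter_subset_of_mem hs⟩
    obtain ⟨E, hEmin⟩ := hzorn
    obtain ⟨hEP, hAE⟩ := hEmin.prop
    have hanti : IsAntisymmetrySet 𝒜 E := by
      intro u hu hreal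
      have hvmem : u - algebraMap ℂ C(X, ℂ) (u a₀) ∈ 𝒜 :=
        sub_mem hu (Subalgebra.algebraMap_mem _ _)
      obtain ⟨v, hvdef⟩ : ∃ v : C(X, ℂ), v = u - algebraMap ℂ C(X, ℂ) (u a₀) := ⟨_, rfl⟩
      have hvmem' : v ∈ 𝒜 := hvdef ▸ hvmem
      have hvapply : ∀ x, v x = u x - u a₀ := by
        intro x
        rw [hvdef]
        simp
      obtain ⟨p, hpmem, hp⟩ := BishopAux.exp_mem h𝒜.1 (neg_mem (mul_mem hvmem' hvmem'))
      have hpx : ∀ x, p x = Complex.exp (-(v x * v x)) := by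
        intro x
        rw [hp x]
        simp
      have hcim : (u a₀).im = 0 := hreal a₀ (hAE ha₀)
      have hvim : ∀ x ∈ E, (v x).im = 0 := by
        intro x hx
        rw [hvapply]
        simp [Complex.sub_im, hreal x hx, hcim]
      have hre : ∀ x ∈ E, (-(v x * v x)).re = -((v x).re ^ 2) := by
        intro x hx
        have him := hvim x hx
        simp [Complex.mul_re, him]
        ring
      have habsp : ∀ x ∈ E, ‖p x‖ ≤ 1 := by
        intro x hx
        rw [hpx, Complex.norm_exp, hre x hx]
        rw [Real.exp_le_one_iff]
        nlinarith [sq_nonneg (v x).re]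
      have hpiff : ∀ x ∈ E, (p x = 1 ↔ u x = u a₀) := by
        intro x hx
        have him := hvim x hx
        constructor
        · intro h1
          have h2 : ‖p x‖ = 1 := by rw [h1]; simp
          rw [hpx, Complex.norm_exp, hre x hx] at h2
          rw [Real.exp_eq_one_iff] at h2
          have hvre : (v x).re = 0 := by nlinarith
          have hvzero : v x = 0 := by
            apply Complex.ext <;> simp [hvre, him]
          have := hvapply x
          rw [hvzero] at this
          have h3 : u x - u a₀ = 0 := this.symm
          linear_combination h3
        · intro h1
          rw [hpx]
          have hvzero : v x = 0 := by
            rw [hvapply, h1]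
            ring
          rw [hvzero]
          simp
      have hF : BishopAux.PSet 𝒜 (E ∩ {x | p x = 1}) := BishopAux.key h𝒜.1 hEP hpmem habsp
      have hAF : A ⊆ E ∩ {x | p x = 1} := by
        intro a ha
        have h1 : u a = u a₀ := hA.1 u hu (fun x hx => hreal x (hAE hx)) a ha a₀ ha₀
        exact ⟨hAE ha, (hpiff a (hAE ha)).2 h1⟩
      have hEF : E ⊆ E ∩ {x | p x = 1} :=
        hEmin.2 ⟨hF, hAF⟩ Set.inter_subset_left
      intro x hx y hy
      have hx1 : u x = u a₀ := (hpiff x hx).1 (hEF hx).2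
      have hy1 : u y = u a₀ := (hpiff y hy).1 (hEF hy).2
      rw [hx1, hy1]
    have hEA : E = A := hA.2 E hanti hAE
    obtain ⟨𝒮, h𝒮, hE𝒮⟩ := hEP
    exact ⟨𝒮, h𝒮, hEA ▸ hE𝒮⟩
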